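/- arXiv:1707.07507 — 3 statements merged into one kernel-verified Lean document; each statement's English description precedes it below -/
import Mathlib

section
/- Let D₁, D₂ be semilocal Prüfer domains with standard decompositions Θ₁, Θ₂. Suppose there is an order isomorphism ν : hiSpec(D₁) → hiSpec(D₂). Then there is an order isomorphism ν̄ : SkOver(D₁) → SkOver(D₂) (both ordered by inclusion) such that: (1) ν̄ restricts to a bijection from Θ₁ to Θ₂; and (2) for every P ∈ hiSpec(D₁) and every T ∈ Θ₁, PT = T if and only if ν(P)ν̄(T) = ν̄(T). -/
/- Common background: Prüfer domains, semistar and (fractional) star operations,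
standard decomposition, skeleton, supports, `hiSpec`, the rings `Z(P)`,
and the invariants `ω` and `ε`, following Spirito,
"Semistar operations on semilocal Prüfer domains". -/

set_option linter.unusedSectionVars false
set_option maxHeartbeats 1000000

open Pointwise

noncomputable section

namespace Paper

variable (D : Type*) [CommRing D] [IsDomain D]
variable (K : Type*) [Field K] [Algebra D K] [IsFractionRing D K]

/-- The localization of `D` at a prime ideal `P`, viewed as an overring of `D`
inside its quotient field `K`. -/
def locAt (P : Ideal D) (hP : P.IsPrime) : Subalgebra D K :=
  Localization.subalgebra K (@Ideal.primeCompl D _ P hP)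
    (fun _ hx => mem_nonZeroDivisors_of_ne_zero fun h => hx (h ▸ P.zero_mem))

/-- A Prüfer domain: every localization at a prime ideal is a valuation domain
(any two elements are comparable w.r.t. divisibility). -/
def IsPrufer : Prop :=
  ∀ (P : Ideal D) (hP : P.IsPrime), ∀ x y : locAt D K P hP, ∃ z, x * z = y ∨ y * z = x

/-- A semilocal ring: finitely many maximal ideals. -/
def IsSemilocal : Prop := {I : Ideal D | I.IsMaximal}.Finite

/-- Two ideals are dependent if some nonzero prime ideal is contained in both. -/
def Dependent (M N : Ideal D) : Prop :=
  ∃ P : Ideal D, P.IsPrime ∧ P ≠ ⊥ ∧ P ≤ M ∧ P ≤ N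

/-- The member of the standard decomposition corresponding to the dependence class
of the maximal ideal `M`: the intersection of the localizations of `D` at the
maximal ideals dependent on `M`. -/
def TOf (M : Ideal D) : Subalgebra D K :=
  sInf {A | ∃ (N : Ideal D) (hN : N.IsMaximal), Dependent D M N ∧ A = locAt D K N hN.isPrime}

/-- The standard decomposition of `D`. -/
def stdDecomp : Set (Subalgebra D K) :=
  {T | ∃ M : Ideal D, M.IsMaximal ∧ T = TOf D K M}

/-- The skeleton of `Over(D)`: all intersections of subsets of the standard
decomposition (including the empty intersection `K` and the total one `D`). -/
def SkOver : Set (Subalgebra D K) :=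
  {A | ∃ S ⊆ stdDecomp D K, A = sInf S}

/-- `I` is a fractional ideal of the overring `A` of `D`: it is an `A`-submodule
of `K` and `dI ⊆ A` for some nonzero `d ∈ K`. -/
def IsFracOf (A : Subalgebra D K) (I : Submodule D K) : Prop :=
  (∀ a ∈ A, ∀ x ∈ I, a * x ∈ I) ∧ ∃ d : K, d ≠ 0 ∧ ∀ x ∈ I, d * x ∈ A

end Paper

namespace Paper

/-- A semistar operation on a domain `R` with quotient field `K`: an extensive,
order-preserving, idempotent self-map of the set of `R`-submodules of `K` such
that `(xI)^⋆ = x·I^⋆` for every nonzero `x ∈ K`. -/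
structure Semistar (R : Type*) [CommRing R] (K : Type*) [Field K] [Algebra R K] where
  toFun : Submodule R K → Submodule R K
  le_star' : ∀ I, I ≤ toFun I
  mono' : ∀ ⦃I J⦄, I ≤ J → toFun I ≤ toFun J
  idem' : ∀ I, toFun (toFun I) = toFun I
  smul' : ∀ (x : K), x ≠ 0 → ∀ I,
    toFun (Submodule.span R {x} * I) = Submodule.span R {x} * toFun I

namespace Semistar

variable {R : Type*} [CommRing R] {K : Type*} [Field K] [Algebra R K]

theorem ext' {s t : Semistar R K} (h : s.toFun = t.toFun) : s = t := by
  cases s; cases t; cases h; rfl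

instance : PartialOrder (Semistar R K) where
  le s t := ∀ I, s.toFun I ≤ t.toFun I
  le_refl _ _ := le_rfl
  le_trans _ _ _ hab hbc I := (hab I).trans (hbc I)
  le_antisymm _ _ h h' := ext' (funext fun I => le_antisymm (h I) (h' I))

end Semistar

/-- The identity semistar operation `d`. -/
def dOp (R : Type*) [CommRing R] (K : Type*) [Field K] [Algebra R K] : Semistar R K where
  toFun I := I
  le_star' _ := le_rfl
  mono' _ _ h := h
  idem' _ := rfl
  smul' _ _ _ := rfl

end Paper

namespace Paper

variable (D : Type*) [CommRing D] [IsDomain D]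
variable (K : Type*) [Field K] [Algebra D K] [IsFractionRing D K]

/-- A fractional star operation on an overring `A` of `D` (inside `K`): a
semistar-like closure operation defined on the fractional ideals of `A`.
In particular `FracStar D K ⊥` is the set of fractional star operations on `D`. -/
structure FracStar (A : Subalgebra D K) where
  toFun : {I : Submodule D K // IsFracOf D K A I} → {I : Submodule D K // IsFracOf D K A I}
  le_star' : ∀ I, I.1 ≤ (toFun I).1
  mono' : ∀ I J, I.1 ≤ J.1 → (toFun I).1 ≤ (toFun J).1
  idem' : ∀ I, toFun (toFun I) = toFun I
  smul' : ∀ (x : K), x ≠ 0 → ∀ I J, J.1 = Submodule.span D {x} * I.1 →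
    (toFun J).1 = Submodule.span D {x} * (toFun I).1

namespace FracStar

variable {D K} {A : Subalgebra D K}

theorem ext' {s t : FracStar D K A} (h : s.toFun = t.toFun) : s = t := by
  cases s; cases t; cases h; rfl

instance : PartialOrder (FracStar D K A) where
  le s t := ∀ I, (s.toFun I).1 ≤ (t.toFun I).1
  le_refl _ _ := le_rfl
  le_trans _ _ _ hab hbc I := (hab I).trans (hbc I)
  le_antisymm _ _ h h' := ext' (funext fun I => Subtype.ext (le_antisymm (h I) (h' I)))

end FracStar

/-- A fractional star operation on the overring `A` is a *star operation* if it
closes `A` itself. -/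
def FracStar.IsStarOp {A : Subalgebra D K} (f : FracStar D K A) : Prop :=
  ∀ h : IsFracOf D K A (Subalgebra.toSubmodule A),
    (f.toFun ⟨Subalgebra.toSubmodule A, h⟩).1 = Subalgebra.toSubmodule A

/-- The support of a semistar operation on `D`: the elements `A` of the skeleton
such that `A^⋆` is a fractional ideal of `A`. -/
def supp (s : Semistar D K) : Set (Subalgebra D K) :=
  {A | A ∈ SkOver D K ∧ IsFracOf D K A (s.toFun (Subalgebra.toSubmodule A))}

/-- The image of an ideal of `D` inside `K`. -/
def idealToK (P : Ideal D) : Submodule D K := Submodule.map (Algebra.linearMap D K) P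

end Paper

namespace Paper

/-- An abstract fractional star operation on a commutative ring `A`, acting on
the fractional ideals of `A` inside its fraction ring. -/
structure AFracStar (A : Type*) [CommRing A] where
  toFun : FractionalIdeal (nonZeroDivisors A) (FractionRing A) →
    FractionalIdeal (nonZeroDivisors A) (FractionRing A)
  le_star' : ∀ I, I ≤ toFun I
  mono' : ∀ ⦃I J⦄, I ≤ J → toFun I ≤ toFun J
  idem' : ∀ I, toFun (toFun I) = toFun I
  smul' : ∀ (x : FractionRing A), x ≠ 0 → ∀ I,
    toFun (FractionalIdeal.spanSingleton (nonZeroDivisors A) x * I) =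
      FractionalIdeal.spanSingleton (nonZeroDivisors A) x * toFun I

namespace AFracStar

variable {A : Type*} [CommRing A]

theorem ext' {s t : AFracStar A} (h : s.toFun = t.toFun) : s = t := by
  cases s; cases t; cases h; rfl

instance : PartialOrder (AFracStar A) where
  le s t := ∀ I, s.toFun I ≤ t.toFun I
  le_refl _ _ := le_rfl
  le_trans _ _ _ hab hbc I := (hab I).trans (hbc I)
  le_antisymm _ _ h h' := ext' (funext fun I => le_antisymm (h I) (h' I))

end AFracStar

/-- Abstract star operations on `A`: fractional star operations closing `A`. -/
def AStar (A : Type*) [CommRing A] : Type _ := {s : AFracStar A // s.toFun 1 = 1}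

instance (A : Type*) [CommRing A] : PartialOrder (AStar A) :=
  inferInstanceAs (PartialOrder {s : AFracStar A // s.toFun 1 = 1})

end Paper

namespace Paper

variable (D : Type*) [CommRing D] [IsDomain D]

/-- `P` is a branching point of `Spec(D)`: the infimum (among the primes) of a
family of pairwise incomparable primes not containing `P`. -/
def IsBranchPoint (P : Ideal D) : Prop :=
  ∃ S : Set (Ideal D), (∀ Q ∈ S, Q.IsPrime) ∧
    (S.Pairwise fun Q₁ Q₂ => ¬Q₁ ≤ Q₂ ∧ ¬Q₂ ≤ Q₁) ∧ P ∉ S ∧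
    (∀ Q ∈ S, P ≤ Q) ∧ ∀ P' : Ideal D, P'.IsPrime → (∀ Q ∈ S, P' ≤ Q) → P' ≤ P

/-- The homeomorphically irreducible tree underlying `Spec(D)`: the zero ideal,
the maximal ideals and the branching points, ordered by inclusion. -/
def hiSpec : Set (Ideal D) :=
  {P | P.IsPrime ∧ (P = ⊥ ∨ P.IsMaximal ∨ IsBranchPoint D P)}

/-- `Q` is the element of `hiSpec D` directly below `P`. -/
def DirectlyBelow (Q P : Ideal D) : Prop :=
  Q ∈ hiSpec D ∧ P ∈ hiSpec D ∧ Q < P ∧ ∀ R ∈ hiSpec D, Q < R → ¬R < P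

/-- The localization of `D` at the prime ideal `P`, as an abstract ring. -/
abbrev locRing (P : Ideal D) (hP : P.IsPrime) : Type _ :=
  Localization (@Ideal.primeCompl D _ P hP)

/-- The valuation ring `Z(P) = D_P / Q·D_P`. -/
abbrev Zring (P Q : Ideal D) (hP : P.IsPrime) : Type _ :=
  locRing D P hP ⧸ Ideal.map (algebraMap D (locRing D P hP)) Q

/-- `ω(P) = |FStar(Z(P))|`, where `Q` is the element of `hiSpec D` directly
below `P`. -/
def omegaAt (P Q : Ideal D) (hP : P.IsPrime) : ℕ :=
  Nat.card (AFracStar (Zring D P Q hP))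

open Classical in
/-- `ε(P) = |Star(D_P)| ∈ {1,2}` for a (nonzero) prime `P`. -/
def epsilonOf (A : Ideal D) : ℕ :=
  if h : A.IsPrime then Nat.card (AStar (locRing D A h)) else 0

end Paper

namespace Paper

theorem mem_hiSpec_prime {D : Type*} [CommRing D] [IsDomain D] {P : Ideal D}
    (h : P ∈ hiSpec D) : P.IsPrime := h.1

theorem maximal_mem_hiSpec {D : Type*} [CommRing D] [IsDomain D] {M : Ideal D}
    (h : M.IsMaximal) : M ∈ hiSpec D := ⟨h.isPrime, Or.inr (Or.inl h)⟩

end Paper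

namespace Paper

section Aux1

variable {D : Type*} [CommRing D] [IsDomain D]
variable {K : Type*} [Field K] [Algebra D K] [IsFractionRing D K]

lemma mem_locAt_iff {P : Ideal D} (hP : P.IsPrime) {x : K} :
    x ∈ locAt D K P hP ↔
      ∃ a s : D, s ∉ P ∧ x * algebraMap D K s = algebraMap D K a := by
  constructor
  · rintro ⟨a, s, hs, rfl⟩
    exact ⟨a, s, hs, IsLocalization.mk'_spec K a ⟨s, _⟩⟩
  · rintro ⟨a, s, hs, h⟩
    refine ⟨a, s, hs, ?_⟩
    exact IsLocalization.eq_mk'_iff_mul_eq.mpr h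

lemma algebraMap_inj' : Function.Injective (algebraMap D K) :=
  IsFractionRing.injective D K

lemma algebraMap_ne_zero {a : D} (ha : a ≠ 0) : algebraMap D K a ≠ 0 := by
  intro h
  exact ha (algebraMap_inj' (K := K) (by rw [h, map_zero]))

lemma inv_algebraMap_mem_locAt {P : Ideal D} (hP : P.IsPrime) {s : D}
    (hs : s ∉ P) : (algebraMap D K s)⁻¹ ∈ locAt D K P hP := by
  have hs0 : s ≠ 0 := fun h => hs (h ▸ P.zero_mem)
  refine (mem_locAt_iff hP).2 ⟨1, s, hs, ?_⟩
  rw [inv_mul_cancel₀ (algebraMap_ne_zero hs0), map_one]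

lemma inv_algebraMap_notMem_locAt {P : Ideal D} (hP : P.IsPrime) {a : D}
    (haP : a ∈ P) (ha0 : a ≠ 0) : (algebraMap D K a)⁻¹ ∉ locAt D K P hP := by
  intro hmem
  obtain ⟨b, s, hs, h⟩ := (mem_locAt_iff hP).1 hmem
  apply hs
  have ha' : algebraMap D K a ≠ 0 := algebraMap_ne_zero ha0
  have : algebraMap D K s = algebraMap D K (b * a) := by
    rw [map_mul]
    field_simp at h
    linear_combination h
  rw [algebraMap_inj' (K := K) this]
  exact P.mul_mem_left b haP

lemma mem_idealToK {P : Ideal D} {x : K} :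
    x ∈ idealToK D K P ↔ ∃ d ∈ P, algebraMap D K d = x := by
  constructor
  · rintro ⟨d, hd, rfl⟩
    exact ⟨d, hd, rfl⟩
  · rintro ⟨d, hd, rfl⟩
    exact ⟨d, hd, rfl⟩

lemma algebraMap_mem_idealToK_iff {P : Ideal D} {d : D} :
    algebraMap D K d ∈ idealToK D K P ↔ d ∈ P := by
  rw [mem_idealToK]
  constructor
  · rintro ⟨c, hc, h⟩
    rwa [← algebraMap_inj' (K := K) h]
  · exact fun h => ⟨d, h, rfl⟩

lemma idealToK_bot : idealToK D K ⊥ = ⊥ := Submodule.map_bot _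

/-- Primes below a prime are comparable, in a Prüfer domain. -/
lemma primes_le_comparable (hp : IsPrufer D K) {M P P' : Ideal D}
    (hM : M.IsPrime) (hPp : P.IsPrime) (hP'p : P'.IsPrime)
    (h1 : P ≤ M) (h2 : P' ≤ M) : P ≤ P' ∨ P' ≤ P := by
  by_contra hcon
  push_neg at hcon
  obtain ⟨hnot1, hnot2⟩ := hcon
  obtain ⟨p, hpP, hpP'⟩ := SetLike.not_le_iff_exists.1 hnot1
  obtain ⟨p', hp'P', hp'P⟩ := SetLike.not_le_iff_exists.1 hnot2
  set x : locAt D K M hM := ⟨algebraMap D K p, (locAt D K M hM).algebraMap_mem p⟩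
  set y : locAt D K M hM := ⟨algebraMap D K p', (locAt D K M hM).algebraMap_mem p'⟩
  obtain ⟨z, hz⟩ := hp M hM x y
  obtain ⟨d, s, hs, hds⟩ := (mem_locAt_iff hM).1 z.2
  rcases hz with hz | hz
  · -- x * z = y : p * z = p'
    have hK : algebraMap D K p * (z : K) = algebraMap D K p' := congrArg Subtype.val hz
    have : algebraMap D K (p * d) = algebraMap D K (p' * s) := by
      rw [map_mul, map_mul, ← hds, ← hK]; ring
    have hd : p * d = p' * s := algebraMap_inj' (K := K) this
    have : p' * s ∈ P := hd ▸ P.mul_mem_right d hpP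
    rcases hPp.mem_or_mem this with h | h
    · exact hp'P h
    · exact hs (h1 h)
  · have hK : algebraMap D K p' * (z : K) = algebraMap D K p := congrArg Subtype.val hz
    have : algebraMap D K (p' * d) = algebraMap D K (p * s) := by
      rw [map_mul, map_mul, ← hds, ← hK]; ring
    have hd : p' * d = p * s := algebraMap_inj' (K := K) this
    have : p * s ∈ P' := hd ▸ P'.mul_mem_right d hp'P'
    rcases hP'p.mem_or_mem this with h | h
    · exact hpP' h
    · exact hs (h2 h)

lemma dep_symm {M N : Ideal D} (h : Dependent D M N) : Dependent D N M := by
  obtain ⟨P, h1, h2, h3, h4⟩ := h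
  exact ⟨P, h1, h2, h4, h3⟩

lemma dep_refl {M : Ideal D} (hM : M.IsPrime) (h0 : M ≠ ⊥) : Dependent D M M :=
  ⟨M, hM, h0, le_rfl, le_rfl⟩

lemma dep_trans (hp : IsPrufer D K) {M N L : Ideal D} (hN : N.IsPrime)
    (h1 : Dependent D M N) (h2 : Dependent D N L) : Dependent D M L := by
  obtain ⟨P, hPp, hP0, hPM, hPN⟩ := h1
  obtain ⟨Q, hQp, hQ0, hQN, hQL⟩ := h2
  rcases primes_le_comparable (K := K) hp hN hPp hQp hPN hQN with h | h
  · exact ⟨P, hPp, hP0, hPM, h.trans hQL⟩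
  · exact ⟨Q, hQp, hQ0, h.trans hPM, hQL⟩

lemma TOf_eq_of_dep (hp : IsPrufer D K) {M N : Ideal D} (hM : M.IsPrime)
    (hN : N.IsPrime) (h : Dependent D M N) : TOf D K M = TOf D K N := by
  unfold TOf
  congr 1
  ext A
  constructor
  · rintro ⟨L, hL, hdep, rfl⟩
    exact ⟨L, hL, dep_trans (K := K) hp hM (dep_symm h) hdep, rfl⟩
  · rintro ⟨L, hL, hdep, rfl⟩
    exact ⟨L, hL, dep_trans (K := K) hp hN h hdep, rfl⟩

end Aux1

end Paper
namespace Paper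

section Aux2

variable {D : Type*} [CommRing D] [IsDomain D]
variable {K : Type*} [Field K] [Algebra D K] [IsFractionRing D K]

/-- Prime avoidance packaged. -/
lemma exists_avoid (hsl : IsSemilocal D) {I : Ideal D} (hI0 : I ≠ ⊥)
    {G : Set (Ideal D)} (hG : ∀ N ∈ G, N.IsMaximal) (h : ∀ N ∈ G, ¬I ≤ N) :
    ∃ a ∈ I, a ≠ 0 ∧ ∀ N ∈ G, a ∉ N := by
  have hGfin : G.Finite := hsl.subset fun N hN => hG N hN
  rcases G.eq_empty_or_nonempty with rfl | ⟨N₀, hN₀⟩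
  · obtain ⟨a, haI, ha0⟩ := Submodule.exists_mem_ne_zero_of_ne_bot hI0
    exact ⟨a, haI, ha0, fun N hN => absurd hN (Set.notMem_empty N)⟩
  · have hGprime : ∀ N ∈ hGfin.toFinset, N ≠ ⊥ → N ≠ ⊥ → Ideal.IsPrime (id N) := by
      intro N hN _ _
      exact (hG N (hGfin.mem_toFinset.1 hN)).isPrime
    have hnot : ¬∃ N ∈ hGfin.toFinset, I ≤ id N := by
      rintro ⟨N, hN, hle⟩
      exact h N (hGfin.mem_toFinset.1 hN) hle
    have hsub := (Ideal.subset_union_prime (f := id) ⊥ ⊥ hGprime (I := I)).not.2 hnot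
    obtain ⟨a, haI, ha⟩ := Set.not_subset.1 hsub
    refine ⟨a, haI, ?_, ?_⟩
    · intro h0
      refine ha (Set.mem_biUnion (hGfin.mem_toFinset.2 hN₀) ?_)
      rw [h0]
      exact N₀.zero_mem
    · intro N hN haN
      exact ha (Set.mem_biUnion (hGfin.mem_toFinset.2 hN) haN)

lemma locAt_mem_TOf_class {M N : Ideal D} (hN : N.IsMaximal) (hdep : Dependent D M N) :
    TOf D K M ≤ locAt D K N hN.isPrime :=
  sInf_le ⟨N, hN, hdep, rfl⟩

/-- Characterization of `P·T = T` for `T = TOf M`. -/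
lemma mul_TOf_eq_iff (hsl : IsSemilocal D) {P M : Ideal D} (hM : M.IsMaximal) :
    idealToK D K P * Subalgebra.toSubmodule (TOf D K M) =
        Subalgebra.toSubmodule (TOf D K M) ↔
      (P ≠ ⊥ ∧ ∀ N : Ideal D, N.IsMaximal → Dependent D M N → ¬P ≤ N) := by
  constructor
  · intro heq
    constructor
    · rintro rfl
      rw [idealToK_bot, Submodule.bot_mul] at heq
      have h1 : (1 : K) ∈ Subalgebra.toSubmodule (TOf D K M) := (TOf D K M).one_mem
      rw [← heq] at h1
      exact one_ne_zero ((Submodule.mem_bot D).1 h1)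
    · intro N hN hdep hle
      have h1 : (1 : K) ∈ idealToK D K P * Subalgebra.toSubmodule (TOf D K M) := by
        rw [heq]; exact (TOf D K M).one_mem
      have key : ∃ s : D, s ∉ N ∧ algebraMap D K s * 1 ∈ idealToK D K N := by
        refine Submodule.mul_induction_on h1 ?_ ?_
        · intro m hm t ht
          obtain ⟨d, hd, rfl⟩ := mem_idealToK.1 hm
          have htN : t ∈ locAt D K N hN.isPrime :=
            locAt_mem_TOf_class (K := K) hN hdep ht
          obtain ⟨a, s, hs, hts⟩ := (mem_locAt_iff hN.isPrime).1 htN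
          refine ⟨s, hs, ?_⟩
          have : algebraMap D K s * (algebraMap D K d * t) = algebraMap D K (d * a) := by
            rw [map_mul, ← hts]; ring
          rw [this]
          exact algebraMap_mem_idealToK_iff.2 (N.mul_mem_right a (hle hd))
        · rintro x y ⟨s₁, hs₁, hx⟩ ⟨s₂, hs₂, hy⟩
          obtain ⟨n₁, hn₁, hn₁e⟩ := mem_idealToK.1 hx
          obtain ⟨n₂, hn₂, hn₂e⟩ := mem_idealToK.1 hy
          refine ⟨s₁ * s₂, fun hmem => ?_, ?_⟩
          · rcases hN.isPrime.mem_or_mem hmem with h | h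
            exacts [hs₁ h, hs₂ h]
          · have : algebraMap D K (s₁ * s₂) * (x + y) =
                algebraMap D K (s₂ * n₁ + s₁ * n₂) := by
              rw [map_add, map_mul, map_mul, map_mul, hn₁e, hn₂e]
              ring
            rw [this]
            exact algebraMap_mem_idealToK_iff.2
              (N.add_mem (N.mul_mem_left s₂ hn₁) (N.mul_mem_left s₁ hn₂))
      obtain ⟨s, hs, hmem⟩ := key
      rw [mul_one] at hmem
      exact hs (algebraMap_mem_idealToK_iff.1 hmem)
  · rintro ⟨hP0, hcond⟩
    obtain ⟨a, haP, ha0, haN⟩ :=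
      exists_avoid hsl hP0 (G := {N | N.IsMaximal ∧ Dependent D M N})
        (fun N hN => hN.1) (fun N hN => hcond N hN.1 hN.2)
    have hainv : (algebraMap D K a)⁻¹ ∈ TOf D K M := by
      unfold TOf
      rw [Algebra.mem_sInf]
      rintro A ⟨N, hN, hdep, rfl⟩
      exact inv_algebraMap_mem_locAt hN.isPrime (haN N ⟨hN, hdep⟩)
    apply le_antisymm
    · rw [Submodule.mul_le]
      intro m hm t ht
      obtain ⟨d, _, rfl⟩ := mem_idealToK.1 hm
      rw [← Algebra.smul_def]
      exact Submodule.smul_mem _ d ht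
    · intro t ht
      have h1 : algebraMap D K a ∈ idealToK D K P := algebraMap_mem_idealToK_iff.2 haP
      have h2 : (algebraMap D K a)⁻¹ * t ∈ Subalgebra.toSubmodule (TOf D K M) :=
        (TOf D K M).mul_mem hainv ht
      have h3 := Submodule.mul_mem_mul h1 h2
      rwa [← mul_assoc, mul_inv_cancel₀ (algebraMap_ne_zero ha0), one_mul] at h3

/-- Independence of the standard decomposition. -/
lemma sInf_TOf_not_le (hsl : IsSemilocal D) {F : Set (Ideal D)}
    (hF : ∀ M ∈ F, M.IsMaximal) {M' : Ideal D} (hM' : M'.IsMaximal) (hM'0 : M' ≠ ⊥)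
    (h : ∀ M ∈ F, ¬Dependent D M M') :
    ¬sInf ((fun M => TOf D K M) '' F) ≤ TOf D K M' := by
  have hG : ∀ N ∈ {N | N.IsMaximal ∧ ∃ M ∈ F, Dependent D M N}, N.IsMaximal :=
    fun N hN => hN.1
  have hnle : ∀ N ∈ {N | N.IsMaximal ∧ ∃ M ∈ F, Dependent D M N}, ¬M' ≤ N := by
    rintro N ⟨hN, M, hMF, hdep⟩ hle
    have : M' = N := hM'.eq_of_le hN.ne_top hle
    exact h M hMF (this ▸ hdep)
  obtain ⟨a, haM', ha0, haN⟩ := exists_avoid hsl hM'0 hG hnle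
  intro hle
  have hmem : (algebraMap D K a)⁻¹ ∈ sInf ((fun M => TOf D K M) '' F) := by
    rw [Algebra.mem_sInf]
    rintro B ⟨M, hMF, rfl⟩
    unfold TOf
    rw [Algebra.mem_sInf]
    rintro A ⟨N, hN, hdep, rfl⟩
    exact inv_algebraMap_mem_locAt hN.isPrime (haN N ⟨hN, ⟨M, hMF, hdep⟩⟩)
  have hmem' := locAt_mem_TOf_class (K := K) hM'
    (dep_refl hM'.isPrime hM'0) (hle hmem)
  exact inv_algebraMap_notMem_locAt hM'.isPrime haM' ha0 hmem'

end Aux2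

end Paper
namespace Paper

section Aux3

variable {D : Type*} [CommRing D] [IsDomain D]
variable {K : Type*} [Field K] [Algebra D K] [IsFractionRing D K]

lemma bot_mem_hiSpec : (⊥ : Ideal D) ∈ hiSpec D :=
  ⟨Ideal.bot_prime, Or.inl rfl⟩

/-- Dependence of maximal ideals is visible in `hiSpec`. -/
lemma dep_iff_hiSpec (hp : IsPrufer D K) {M N : Ideal D}
    (hM : M.IsMaximal) (hN : N.IsMaximal) :
    Dependent D M N ↔ ∃ R ∈ hiSpec D, R ≠ ⊥ ∧ R ≤ M ∧ R ≤ N := by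
  constructor
  · rintro ⟨P, hPp, hP0, hPM, hPN⟩
    by_cases hMN : M = N
    · refine ⟨M, maximal_mem_hiSpec hM, ?_, le_rfl, hMN ▸ le_rfl⟩
      intro h
      exact hP0 (le_bot_iff.1 (h ▸ hPM))
    · set C : Set (Ideal D) := {Q | Q.IsPrime ∧ Q ≤ M ∧ Q ≤ N} with hC
      have hCne : C.Nonempty := ⟨P, hPp, hPM, hPN⟩
      have hdir : DirectedOn (· ≤ ·) C := by
        rintro Q₁ ⟨h₁p, h₁M, h₁N⟩ Q₂ ⟨h₂p, h₂M, h₂N⟩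
        rcases primes_le_comparable (K := K) hp hM.isPrime h₁p h₂p h₁M h₂M with h | h
        · exact ⟨Q₂, ⟨h₂p, h₂M, h₂N⟩, h, le_rfl⟩
        · exact ⟨Q₁, ⟨h₁p, h₁M, h₁N⟩, le_rfl, h⟩
      set R := sSup C with hR
      have hmem : ∀ x : D, x ∈ R ↔ ∃ Q ∈ C, x ∈ Q := fun x =>
        Submodule.mem_sSup_of_directed hCne hdir
      have hRM : R ≤ M := sSup_le fun Q hQ => hQ.2.1
      have hRN : R ≤ N := sSup_le fun Q hQ => hQ.2.2
      have hRp : R.IsPrime := by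
        constructor
        · intro h
          exact hM.ne_top (top_le_iff.1 (h ▸ hRM))
        · intro x y hxy
          obtain ⟨Q, hQ, hxyQ⟩ := (hmem (x * y)).1 hxy
          rcases hQ.1.mem_or_mem hxyQ with h | h
          · exact Or.inl ((hmem x).2 ⟨Q, hQ, h⟩)
          · exact Or.inr ((hmem y).2 ⟨Q, hQ, h⟩)
      have hPR : P ≤ R := le_sSup ⟨hPp, hPM, hPN⟩
      have hR0 : R ≠ ⊥ := fun h => hP0 (le_bot_iff.1 (h ▸ hPR))
      have hMnleN : ¬M ≤ N := fun h => hMN (hM.eq_of_le hN.ne_top h)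
      have hNnleM : ¬N ≤ M := fun h => hMN (hN.eq_of_le hM.ne_top h).symm
      refine ⟨R, ⟨hRp, Or.inr (Or.inr ⟨{M, N}, ?_, ?_, ?_, ?_, ?_⟩)⟩, hR0, hRM, hRN⟩
      · rintro Q (rfl | rfl)
        exacts [hM.isPrime, hN.isPrime]
      · rintro Q₁ (rfl | rfl) Q₂ (rfl | rfl) hne
        · exact absurd rfl hne
        · exact ⟨hMnleN, hNnleM⟩
        · exact ⟨hNnleM, hMnleN⟩
        · exact absurd rfl hne
      · intro hmemMN
        simp only [Set.mem_insert_iff, Set.mem_singleton_iff] at hmemMN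
        rcases hmemMN with h | h
        · exact hMnleN (h ▸ hRN)
        · exact hNnleM (h ▸ hRM)
      · rintro Q (rfl | rfl)
        exacts [hRM, hRN]
      · intro P' hP' hle
        exact le_sSup ⟨hP', hle M (Or.inl rfl), hle N (Or.inr rfl)⟩
  · rintro ⟨R, hR, hR0, h1, h2⟩
    exact ⟨R, hR.1, hR0, h1, h2⟩

end Aux3

section Aux4

variable {D : Type*} [CommRing D] [IsDomain D]
variable {D' : Type*} [CommRing D'] [IsDomain D']

/-- An order isomorphism of `hiSpec`s sends maximal ideals to maximal ideals. -/
lemma orderIso_max (e : ↥(hiSpec D) ≃o ↥(hiSpec D')) (x : ↥(hiSpec D))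
    (h : x.1.IsMaximal) : (e x).1.IsMaximal := by
  have key : ∀ y : ↥(hiSpec D'), e x ≤ y → e x = y := by
    intro y hy
    have hxy : x ≤ e.symm y := by
      have := e.symm.monotone hy
      rwa [e.symm_apply_apply] at this
    have hval : x.1 = (e.symm y).1 := h.eq_of_le (e.symm y).2.1.ne_top hxy
    have : x = e.symm y := Subtype.ext hval
    rw [this, e.apply_symm_apply]
  obtain ⟨M', hM', hle⟩ := Ideal.exists_le_maximal (e x).1 (e x).2.1.ne_top
  have := key ⟨M', maximal_mem_hiSpec hM'⟩ hle
  rw [this]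
  exact hM'

lemma orderIso_bot (e : ↥(hiSpec D) ≃o ↥(hiSpec D')) :
    (e ⟨⊥, bot_mem_hiSpec⟩).1 = ⊥ := by
  have h : ∀ y : ↥(hiSpec D'), e ⟨⊥, bot_mem_hiSpec⟩ ≤ y := by
    intro y
    have : (⟨⊥, bot_mem_hiSpec⟩ : ↥(hiSpec D)) ≤ e.symm y :=
      Subtype.coe_le_coe.1 bot_le
    have h2 := e.monotone this
    rwa [e.apply_symm_apply] at h2
  exact le_bot_iff.1 (h ⟨⊥, bot_mem_hiSpec⟩)

lemma orderIso_bot_iff (e : ↥(hiSpec D) ≃o ↥(hiSpec D')) (x : ↥(hiSpec D)) :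
    (e x).1 = ⊥ ↔ x.1 = ⊥ := by
  constructor
  · intro h
    have : e x = e ⟨⊥, bot_mem_hiSpec⟩ := Subtype.ext (h.trans (orderIso_bot e).symm)
    have := e.injective this
    rw [this]
  · intro h
    have : x = (⟨⊥, bot_mem_hiSpec⟩ : ↥(hiSpec D)) := Subtype.ext h
    rw [this]
    exact orderIso_bot e

end Aux4

end Paper
namespace Paper

open Classical in
/-- Transfer of ideals along an order isomorphism of `hiSpec`s. -/
def gIdeal {D : Type*} [CommRing D] [IsDomain D] {D' : Type*} [CommRing D'] [IsDomain D']
    (e : ↥(hiSpec D) ≃o ↥(hiSpec D')) (M : Ideal D) : Ideal D' :=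
  if h : M ∈ hiSpec D then (e ⟨M, h⟩).1 else ⊥

/-- Maximal ideals whose `TOf` lies above `A`. -/
def MS (D : Type*) [CommRing D] [IsDomain D]
    (K : Type*) [Field K] [Algebra D K] [IsFractionRing D K]
    (A : Subalgebra D K) : Set (Ideal D) :=
  {M | M.IsMaximal ∧ A ≤ TOf D K M}

/-- Transfer of skeleton elements. -/
def fSk {D : Type*} [CommRing D] [IsDomain D]
    (K : Type*) [Field K] [Algebra D K] [IsFractionRing D K]
    {D' : Type*} [CommRing D'] [IsDomain D']
    (K' : Type*) [Field K'] [Algebra D' K'] [IsFractionRing D' K']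
    (e : ↥(hiSpec D) ≃o ↥(hiSpec D')) (A : Subalgebra D K) : Subalgebra D' K' :=
  sInf ((fun M => TOf D' K' (gIdeal e M)) '' MS D K A)

section Aux5

variable {D : Type*} [CommRing D] [IsDomain D]
variable {K : Type*} [Field K] [Algebra D K] [IsFractionRing D K]
variable {D' : Type*} [CommRing D'] [IsDomain D']
variable {K' : Type*} [Field K'] [Algebra D' K'] [IsFractionRing D' K']

lemma gIdeal_eq (e : ↥(hiSpec D) ≃o ↥(hiSpec D')) {M : Ideal D} (h : M ∈ hiSpec D) :
    gIdeal e M = (e ⟨M, h⟩).1 := dif_pos h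

lemma gIdeal_max (e : ↥(hiSpec D) ≃o ↥(hiSpec D')) {M : Ideal D} (hM : M.IsMaximal) :
    (gIdeal e M).IsMaximal := by
  rw [gIdeal_eq e (maximal_mem_hiSpec hM)]
  exact orderIso_max e _ hM

lemma gIdeal_symm_gIdeal (e : ↥(hiSpec D) ≃o ↥(hiSpec D')) {M : Ideal D}
    (h : M ∈ hiSpec D) : gIdeal e.symm (gIdeal e M) = M := by
  rw [gIdeal_eq e h, gIdeal_eq e.symm (e ⟨M, h⟩).2]
  rw [Subtype.coe_eta, e.symm_apply_apply]

lemma gIdeal_gIdeal_symm (e : ↥(hiSpec D) ≃o ↥(hiSpec D')) {M' : Ideal D'}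
    (h : M' ∈ hiSpec D') : gIdeal e (gIdeal e.symm M') = M' := by
  have := gIdeal_symm_gIdeal e.symm h
  rwa [e.symm_symm] at this

lemma gIdeal_ne_bot (e : ↥(hiSpec D) ≃o ↥(hiSpec D')) {M : Ideal D}
    (h : M ∈ hiSpec D) (h0 : M ≠ ⊥) : gIdeal e M ≠ ⊥ := by
  rw [gIdeal_eq e h]
  intro hc
  exact h0 ((orderIso_bot_iff e ⟨M, h⟩).1 hc)

lemma gIdeal_le_iff (e : ↥(hiSpec D) ≃o ↥(hiSpec D')) (P : ↥(hiSpec D))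
    {M : Ideal D} (h : M ∈ hiSpec D) :
    P.1 ≤ M ↔ (e P).1 ≤ gIdeal e M := by
  rw [gIdeal_eq e h]
  constructor
  · intro hle
    exact Subtype.coe_le_coe.2 (e.monotone (Subtype.coe_le_coe.1 hle))
  · intro hle
    have := e.symm.monotone (Subtype.coe_le_coe.1 hle)
    rw [e.symm_apply_apply, e.symm_apply_apply] at this
    exact Subtype.coe_le_coe.2 this

lemma gIdeal_dep (hp : IsPrufer D K) (e : ↥(hiSpec D) ≃o ↥(hiSpec D'))
    {M N : Ideal D} (hM : M.IsMaximal) (hN : N.IsMaximal)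
    (h : Dependent D M N) : Dependent D' (gIdeal e M) (gIdeal e N) := by
  obtain ⟨R, hR, hR0, hRM, hRN⟩ := (dep_iff_hiSpec (K := K) hp hM hN).1 h
  refine ⟨(e ⟨R, hR⟩).1, (e ⟨R, hR⟩).2.1, ?_, ?_, ?_⟩
  · intro hc
    exact hR0 ((orderIso_bot_iff e ⟨R, hR⟩).1 hc)
  · exact (gIdeal_le_iff e ⟨R, hR⟩ (maximal_mem_hiSpec hM)).1 hRM
  · exact (gIdeal_le_iff e ⟨R, hR⟩ (maximal_mem_hiSpec hN)).1 hRN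

lemma gIdeal_dep_iff (hp : IsPrufer D K) (hp' : IsPrufer D' K')
    (e : ↥(hiSpec D) ≃o ↥(hiSpec D'))
    {M N : Ideal D} (hM : M.IsMaximal) (hN : N.IsMaximal) :
    Dependent D M N ↔ Dependent D' (gIdeal e M) (gIdeal e N) := by
  constructor
  · exact gIdeal_dep (K := K) hp e hM hN
  · intro h
    have := gIdeal_dep (K := K') hp' e.symm (gIdeal_max e hM) (gIdeal_max e hN) h
    rwa [gIdeal_symm_gIdeal e (maximal_mem_hiSpec hM),
      gIdeal_symm_gIdeal e (maximal_mem_hiSpec hN)] at this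

lemma TOf_mem_SkOver {M : Ideal D} (hM : M.IsMaximal) : TOf D K M ∈ SkOver D K := by
  refine ⟨{TOf D K M}, ?_, sInf_singleton.symm⟩
  rintro T rfl
  exact ⟨M, hM, rfl⟩

lemma stdDecomp_subset_SkOver {T : Subalgebra D K} (hT : T ∈ stdDecomp D K) :
    T ∈ SkOver D K := by
  obtain ⟨M, hM, rfl⟩ := hT
  exact TOf_mem_SkOver hM

lemma fSk_mem_SkOver (e : ↥(hiSpec D) ≃o ↥(hiSpec D')) (A : Subalgebra D K) :
    fSk K K' e A ∈ SkOver D' K' := by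
  refine ⟨_, ?_, rfl⟩
  rintro B ⟨M, hM, rfl⟩
  exact ⟨gIdeal e M, gIdeal_max e hM.1, rfl⟩

lemma SkOver_eq_sInf_MS {A : Subalgebra D K} (hA : A ∈ SkOver D K) :
    A = sInf ((fun M => TOf D K M) '' MS D K A) := by
  obtain ⟨S, hS, rfl⟩ := hA
  apply le_antisymm
  · apply le_sInf
    rintro B ⟨M, hM, rfl⟩
    exact hM.2
  · apply sInf_le_sInf
    intro T hT
    obtain ⟨M, hMmax, rfl⟩ := hS hT
    exact ⟨M, ⟨hMmax, sInf_le hT⟩, rfl⟩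

lemma fSk_mono (e : ↥(hiSpec D) ≃o ↥(hiSpec D')) {A B : Subalgebra D K}
    (h : A ≤ B) : fSk K K' e A ≤ fSk K K' e B := by
  apply sInf_le_sInf
  apply Set.image_mono
  rintro M ⟨hM, hle⟩
  exact ⟨hM, h.trans hle⟩

lemma MS_fSk (hp : IsPrufer D K) (hp' : IsPrufer D' K')
    (hsl' : IsSemilocal D') (hb' : ¬(⊥ : Ideal D').IsMaximal)
    (e : ↥(hiSpec D) ≃o ↥(hiSpec D')) {A : Subalgebra D K} (hA : A ∈ SkOver D K) :
    MS D' K' (fSk K K' e A) = gIdeal e '' MS D K A := by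
  apply Set.Subset.antisymm
  · rintro M' ⟨hM'max, hle⟩
    by_contra hnot
    have hdepnone : ∀ N ∈ gIdeal e '' MS D K A, ¬Dependent D' N M' := by
      rintro N ⟨M₀, hM₀, rfl⟩ hdep
      set M₁ := gIdeal e.symm M' with hM₁
      have hM₁max : M₁.IsMaximal := gIdeal_max e.symm hM'max
      have hM' : gIdeal e M₁ = M' :=
        gIdeal_gIdeal_symm e (maximal_mem_hiSpec hM'max)
      rw [← hM'] at hdep
      have hdep01 : Dependent D M₀ M₁ :=
        (gIdeal_dep_iff (K := K) (K' := K') hp hp' e hM₀.1 hM₁max).2 hdep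
      have : TOf D K M₀ = TOf D K M₁ :=
        TOf_eq_of_dep (K := K) hp hM₀.1.isPrime hM₁max.isPrime hdep01
      exact hnot ⟨M₁, ⟨hM₁max, hM₀.2.trans (le_of_eq this)⟩, hM'⟩
    have hnle := sInf_TOf_not_le (K := K') hsl'
      (F := gIdeal e '' MS D K A)
      (by rintro N ⟨M₀, hM₀, rfl⟩; exact gIdeal_max e hM₀.1)
      hM'max (fun hc => hb' (hc ▸ hM'max)) hdepnone
    apply hnle
    have : fSk K K' e A = sInf ((fun N => TOf D' K' N) '' (gIdeal e '' MS D K A)) := by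
      rw [Set.image_image]
      rfl
    rw [← this]
    exact hle
  · rintro _ ⟨M, hM, rfl⟩
    exact ⟨gIdeal_max e hM.1, sInf_le ⟨M, hM, rfl⟩⟩

lemma fSk_fSk (hp : IsPrufer D K) (hp' : IsPrufer D' K')
    (hsl' : IsSemilocal D') (hb' : ¬(⊥ : Ideal D').IsMaximal)
    (e : ↥(hiSpec D) ≃o ↥(hiSpec D')) {A : Subalgebra D K} (hA : A ∈ SkOver D K) :
    fSk K' K e.symm (fSk K K' e A) = A := by
  have h1 : fSk K' K e.symm (fSk K K' e A) =
      sInf ((fun M' => TOf D K (gIdeal e.symm M')) '' (gIdeal e '' MS D K A)) := by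
    rw [fSk, MS_fSk hp hp' hsl' hb' e hA]
  rw [h1, Set.image_image]
  have h2 : ∀ M ∈ MS D K A,
      TOf D K (gIdeal e.symm (gIdeal e M)) = TOf D K M := by
    intro M hM
    rw [gIdeal_symm_gIdeal e (maximal_mem_hiSpec hM.1)]
  rw [Set.image_congr h2]
  exact (SkOver_eq_sInf_MS hA).symm

lemma fSk_TOf (hp : IsPrufer D K) (hp' : IsPrufer D' K')
    (hsl : IsSemilocal D) (hb : ¬(⊥ : Ideal D).IsMaximal)
    (e : ↥(hiSpec D) ≃o ↥(hiSpec D')) {M : Ideal D} (hM : M.IsMaximal) :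
    fSk K K' e (TOf D K M) = TOf D' K' (gIdeal e M) := by
  apply le_antisymm
  · exact sInf_le ⟨M, ⟨hM, le_rfl⟩, rfl⟩
  · apply le_sInf
    rintro B ⟨N, ⟨hNmax, hle⟩, rfl⟩
    have hdep : Dependent D M N := by
      by_contra hdep
      have := sInf_TOf_not_le (K := K) hsl (F := {M})
        (by rintro M₀ rfl; exact hM) hNmax (fun hc => hb (hc ▸ hNmax))
        (by rintro M₀ rfl; exact hdep)
      rw [Set.image_singleton, sInf_singleton] at this
      exact this hle
    have hdep' := gIdeal_dep (K := K) hp e hM hNmax hdep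
    have : TOf D' K' (gIdeal e M) = TOf D' K' (gIdeal e N) :=
      TOf_eq_of_dep (K := K') hp' (gIdeal_max e hM).isPrime
        (gIdeal_max e hNmax).isPrime hdep'
    exact le_of_eq this

end Aux5

end Paper
namespace Paper

section Aux6

variable {D : Type*} [CommRing D] [IsDomain D]
variable {K : Type*} [Field K] [Algebra D K] [IsFractionRing D K]
variable {D' : Type*} [CommRing D'] [IsDomain D']
variable {K' : Type*} [Field K'] [Algebra D' K'] [IsFractionRing D' K']

/-- Transfer of the condition `P·T = T`. -/
lemma mul_transfer (hp : IsPrufer D K) (hp' : IsPrufer D' K')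
    (hsl : IsSemilocal D) (hsl' : IsSemilocal D')
    (e : ↥(hiSpec D) ≃o ↥(hiSpec D')) (P : ↥(hiSpec D)) {M : Ideal D}
    (hM : M.IsMaximal) :
    (idealToK D K P.1 * Subalgebra.toSubmodule (TOf D K M) =
        Subalgebra.toSubmodule (TOf D K M)) ↔
      (idealToK D' K' (e P).1 * Subalgebra.toSubmodule (TOf D' K' (gIdeal e M)) =
        Subalgebra.toSubmodule (TOf D' K' (gIdeal e M))) := by
  rw [mul_TOf_eq_iff hsl hM, mul_TOf_eq_iff hsl' (gIdeal_max e hM)]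
  constructor
  · rintro ⟨h0, hcond⟩
    refine ⟨fun hc => h0 ((orderIso_bot_iff e P).1 hc), ?_⟩
    intro N' hN' hdep hle
    set N := gIdeal e.symm N' with hN
    have hNmax : N.IsMaximal := gIdeal_max e.symm hN'
    have hNN' : gIdeal e N = N' := gIdeal_gIdeal_symm e (maximal_mem_hiSpec hN')
    rw [← hNN'] at hdep hle
    have hdepMN : Dependent D M N :=
      (gIdeal_dep_iff (K := K) (K' := K') hp hp' e hM hNmax).2 hdep
    exact hcond N hNmax hdepMN ((gIdeal_le_iff e P (maximal_mem_hiSpec hNmax)).2 hle)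
  · rintro ⟨h0, hcond⟩
    refine ⟨fun hc => h0 ((orderIso_bot_iff e P).2 hc), ?_⟩
    intro N hN hdep hle
    exact hcond (gIdeal e N) (gIdeal_max e hN)
      (gIdeal_dep (K := K) hp e hM hN hdep)
      ((gIdeal_le_iff e P (maximal_mem_hiSpec hN)).1 hle)

end Aux6

section Aux7

variable {D : Type*} [CommRing D] [IsDomain D]
variable {K : Type*} [Field K] [Algebra D K] [IsFractionRing D K]
variable {D' : Type*} [CommRing D'] [IsDomain D']

lemma prime_eq_bot_of_bot_max (hb : (⊥ : Ideal D).IsMaximal) {P : Ideal D}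
    (hP : P.IsPrime) : P = ⊥ :=
  (hb.eq_of_le hP.ne_top bot_le).symm

lemma bot_max_transfer (e : ↥(hiSpec D) ≃o ↥(hiSpec D'))
    (hb : (⊥ : Ideal D).IsMaximal) : (⊥ : Ideal D').IsMaximal := by
  obtain ⟨M', hM'⟩ := Ideal.exists_maximal D'
  have h1 : (e.symm ⟨M', maximal_mem_hiSpec hM'⟩).1 = ⊥ :=
    prime_eq_bot_of_bot_max hb (e.symm ⟨M', maximal_mem_hiSpec hM'⟩).2.1
  have h2 : (e.symm ⟨⊥, bot_mem_hiSpec⟩).1 = ⊥ := orderIso_bot e.symm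
  have h3 : e.symm ⟨M', maximal_mem_hiSpec hM'⟩ = e.symm ⟨⊥, bot_mem_hiSpec⟩ :=
    Subtype.ext (h1.trans h2.symm)
  have h4 := e.symm.injective h3
  have h5 : M' = ⊥ := congrArg Subtype.val h4
  exact h5 ▸ hM'

lemma TOf_bot : TOf D K ⊥ = ⊤ := by
  unfold TOf
  have : {A : Subalgebra D K | ∃ N, ∃ hN : N.IsMaximal,
      Dependent D ⊥ N ∧ A = locAt D K N hN.isPrime} = ∅ := by
    ext A
    simp only [Set.mem_empty_iff_false, iff_false]
    rintro ⟨N, hN, ⟨P, hP, hP0, hPb, hPN⟩, rfl⟩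
    exact hP0 (le_bot_iff.1 hPb)
  rw [this, sInf_empty]

lemma stdDecomp_field (hb : (⊥ : Ideal D).IsMaximal) {T : Subalgebra D K}
    (hT : T ∈ stdDecomp D K) : T = ⊤ := by
  obtain ⟨M, hM, rfl⟩ := hT
  rw [prime_eq_bot_of_bot_max hb hM.isPrime, TOf_bot]

lemma SkOver_field (hb : (⊥ : Ideal D).IsMaximal) {A : Subalgebra D K}
    (hA : A ∈ SkOver D K) : A = ⊤ := by
  obtain ⟨S, hS, rfl⟩ := hA
  rw [eq_top_iff]
  apply le_sInf
  intro B hB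
  rw [stdDecomp_field hb (hS hB)]

lemma top_mem_SkOver : (⊤ : Subalgebra D K) ∈ SkOver D K :=
  ⟨∅, Set.empty_subset _, sInf_empty.symm⟩

lemma top_mem_stdDecomp (hb : (⊥ : Ideal D).IsMaximal) :
    (⊤ : Subalgebra D K) ∈ stdDecomp D K :=
  ⟨⊥, hb, TOf_bot.symm⟩

lemma bot_mul_ne {A : Subalgebra D K} :
    idealToK D K ⊥ * Subalgebra.toSubmodule A ≠ Subalgebra.toSubmodule A := by
  intro h
  rw [idealToK_bot, Submodule.bot_mul] at h
  have h1 : (1 : K) ∈ Subalgebra.toSubmodule A := A.one_mem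
  rw [← h] at h1
  exact one_ne_zero ((Submodule.mem_bot D).1 h1)

end Aux7

end Paper

namespace Paper

/-- An order isomorphism `ν : hiSpec(D₁) → hiSpec(D₂)` induces an
order isomorphism `ν̄ : SkOver(D₁) → SkOver(D₂)` restricting to a bijection between
the standard decompositions, and such that `P·T = T` iff `ν(P)·ν̄(T) = ν̄(T)`. -/
theorem statement8
    (D₁ : Type*) [CommRing D₁] [IsDomain D₁]
    (K₁ : Type*) [Field K₁] [Algebra D₁ K₁] [IsFractionRing D₁ K₁]
    (D₂ : Type*) [CommRing D₂] [IsDomain D₂]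
    (K₂ : Type*) [Field K₂] [Algebra D₂ K₂] [IsFractionRing D₂ K₂]
    (hp₁ : IsPrufer D₁ K₁) (hsl₁ : IsSemilocal D₁)
    (hp₂ : IsPrufer D₂ K₂) (hsl₂ : IsSemilocal D₂)
    (ν : ↥(hiSpec D₁) ≃o ↥(hiSpec D₂)) :
    ∃ νbar : ↥(SkOver D₁ K₁) ≃o ↥(SkOver D₂ K₂),
      (∀ T : ↥(SkOver D₁ K₁), T.1 ∈ stdDecomp D₁ K₁ ↔ (νbar T).1 ∈ stdDecomp D₂ K₂) ∧
      ∀ (P : ↥(hiSpec D₁)) (T : ↥(SkOver D₁ K₁)), T.1 ∈ stdDecomp D₁ K₁ →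
        (idealToK D₁ K₁ P.1 * Subalgebra.toSubmodule T.1 = Subalgebra.toSubmodule T.1 ↔
          idealToK D₂ K₂ (ν P).1 * Subalgebra.toSubmodule (νbar T).1 =
            Subalgebra.toSubmodule (νbar T).1) := by
  by_cases hb1 : (⊥ : Ideal D₁).IsMaximal
  · -- `D₁` (and hence `D₂`) is a field; everything is trivial.
    have hb2 : (⊥ : Ideal D₂).IsMaximal := bot_max_transfer ν hb1
    have hA1 : ∀ A : ↥(SkOver D₁ K₁), A = ⟨⊤, top_mem_SkOver⟩ :=
      fun A => Subtype.ext (SkOver_field hb1 A.2)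
    have hA2 : ∀ B : ↥(SkOver D₂ K₂), B = ⟨⊤, top_mem_SkOver⟩ :=
      fun B => Subtype.ext (SkOver_field hb2 B.2)
    let νbar : ↥(SkOver D₁ K₁) ≃o ↥(SkOver D₂ K₂) :=
      { toFun := fun _ => ⟨⊤, top_mem_SkOver⟩
        invFun := fun _ => ⟨⊤, top_mem_SkOver⟩
        left_inv := fun A => (hA1 A).symm
        right_inv := fun B => (hA2 B).symm
        map_rel_iff' := by
          intro A B
          rw [hA1 A, hA1 B]
          exact iff_of_true le_rfl le_rfl }
    have hval : ∀ T : ↥(SkOver D₁ K₁), (νbar T).1 = (⊤ : Subalgebra D₂ K₂) :=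
      fun T => rfl
    refine ⟨νbar, ?_, ?_⟩
    · intro T
      rw [hval T, SkOver_field hb1 T.2]
      exact iff_of_true (top_mem_stdDecomp hb1) (top_mem_stdDecomp hb2)
    · intro P T hT
      have hP1 : P.1 = ⊥ := prime_eq_bot_of_bot_max hb1 P.2.1
      have hP2 : (ν P).1 = ⊥ := prime_eq_bot_of_bot_max hb2 (ν P).2.1
      rw [hP1, hP2]
      exact iff_of_false bot_mul_ne bot_mul_ne
  · -- the general (nonfield) case
    have hb2 : ¬(⊥ : Ideal D₂).IsMaximal := fun h => hb1 (bot_max_transfer ν.symm h)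
    let νbar : ↥(SkOver D₁ K₁) ≃o ↥(SkOver D₂ K₂) :=
      { toFun := fun A => ⟨fSk K₁ K₂ ν A.1, fSk_mem_SkOver ν A.1⟩
        invFun := fun B => ⟨fSk K₂ K₁ ν.symm B.1, fSk_mem_SkOver ν.symm B.1⟩
        left_inv := fun A => Subtype.ext (fSk_fSk hp₁ hp₂ hsl₂ hb2 ν A.2)
        right_inv := fun B => Subtype.ext (by
          have h := fSk_fSk hp₂ hp₁ hsl₁ hb1 ν.symm B.2
          rwa [OrderIso.symm_symm] at h)
        map_rel_iff' := by
          intro A B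
          constructor
          · intro h
            have h1 : fSk K₁ K₂ ν A.1 ≤ fSk K₁ K₂ ν B.1 := h
            have h2 := fSk_mono (K := K₂) (K' := K₁) ν.symm h1
            rw [fSk_fSk hp₁ hp₂ hsl₂ hb2 ν A.2,
              fSk_fSk hp₁ hp₂ hsl₂ hb2 ν B.2] at h2
            exact h2
          · intro h
            exact fSk_mono (K := K₁) (K' := K₂) ν (Subtype.coe_le_coe.2 h) }
    have hval : ∀ T : ↥(SkOver D₁ K₁), (νbar T).1 = fSk K₁ K₂ ν T.1 :=
      fun T => rfl
    refine ⟨νbar, ?_, ?_⟩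
    · intro T
      rw [hval T]
      constructor
      · rintro ⟨M, hM, hTeq⟩
        rw [hTeq, fSk_TOf hp₁ hp₂ hsl₁ hb1 ν hM]
        exact ⟨gIdeal ν M, gIdeal_max ν hM, rfl⟩
      · rintro ⟨M', hM', hTeq⟩
        refine ⟨gIdeal ν.symm M', gIdeal_max ν.symm hM', ?_⟩
        calc T.1 = fSk K₂ K₁ ν.symm (fSk K₁ K₂ ν T.1) :=
              (fSk_fSk hp₁ hp₂ hsl₂ hb2 ν T.2).symm
          _ = fSk K₂ K₁ ν.symm (TOf D₂ K₂ M') := by rw [hTeq]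
          _ = TOf D₁ K₁ (gIdeal ν.symm M') :=
              fSk_TOf hp₂ hp₁ hsl₂ hb2 ν.symm hM'
    · intro P T hT
      obtain ⟨M, hM, hTeq⟩ := hT
      rw [hval T, hTeq, fSk_TOf hp₁ hp₂ hsl₁ hb1 ν hM]
      exact mul_transfer hp₁ hp₂ hsl₁ hsl₂ ν P hM


end Paper
end
end

section
/- Let D be a semilocal Prüfer domain with standard decomposition Θ, and let ⋆ be a semistar operation on D. Then D^⋆ = D if and only if D ∈ supp(⋆) and Γ_T(⋆)(D) is a star operation on T for every T ∈ Θ. -/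
/- Common background: Prüfer domains, semistar and (fractional) star operations,
standard decomposition, skeleton, supports, `hiSpec`, the rings `Z(P)`,
and the invariants `ω` and `ε`, following Spirito,
"Semistar operations on semilocal Prüfer domains". -/

set_option linter.unusedSectionVars false
set_option maxHeartbeats 1000000

open Pointwise

noncomputable section

namespace Paper

theorem mem_bot_of_forall_loc
    (D : Type*) [CommRing D] [IsDomain D]
    (K : Type*) [Field K] [Algebra D K] [IsFractionRing D K]
    (x : K)
    (hx : ∀ (N : Ideal D) (hN : N.IsMaximal), x ∈ locAt D K N hN.isPrime) :
    x ∈ (⊥ : Subalgebra D K) := by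
  rw [Algebra.mem_bot]
  -- the ideal of denominators of x
  set I : Ideal D :=
    { carrier := {d | ∃ a : D, algebraMap D K a = algebraMap D K d * x}
      add_mem' := by
        rintro d e ⟨a, ha⟩ ⟨b, hb⟩
        exact ⟨a + b, by rw [map_add, map_add, ha, hb, add_mul]⟩
      zero_mem' := ⟨0, by simp⟩
      smul_mem' := by
        rintro c d ⟨a, ha⟩
        exact ⟨c * a, by rw [smul_eq_mul, map_mul, map_mul, ha, mul_assoc]⟩ } with hI
  have hItop : I = ⊤ := by
    by_contra h
    obtain ⟨N, hN, hIN⟩ := Ideal.exists_le_maximal I h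
    obtain ⟨a, t, ht, hxt⟩ := hx N hN
    have : t ∈ I := ⟨a, by rw [hxt, mul_comm]; exact (IsLocalization.mk'_spec K a _).symm⟩
    exact ht (hIN this)
  have h1 : (1 : D) ∈ I := hItop ▸ Submodule.mem_top
  obtain ⟨a, ha⟩ := h1
  exact ⟨a, by rw [ha, map_one, one_mul]⟩

theorem sInf_stdDecomp_eq_bot
    (D : Type*) [CommRing D] [IsDomain D]
    (K : Type*) [Field K] [Algebra D K] [IsFractionRing D K] :
    sInf (stdDecomp D K) = (⊥ : Subalgebra D K) := by
  by_cases hf : IsField D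
  · -- D is a field: ⊥ = ⊤ as subalgebras of K
    apply le_antisymm _ bot_le
    intro x _
    rw [Algebra.mem_bot]
    obtain ⟨⟨a, ⟨b, hb⟩⟩, hx⟩ := IsLocalization.mk'_surjective (nonZeroDivisors D) x
    dsimp only at hx
    have hb0 : b ≠ 0 := nonZeroDivisors.ne_zero hb
    obtain ⟨c, hc⟩ := hf.mul_inv_cancel hb0
    refine ⟨a * c, ?_⟩
    rw [← hx]
    rw [IsLocalization.eq_mk'_iff_mul_eq]
    simp only [← map_mul]
    congr 1
    rw [mul_assoc, mul_comm c b, hc, mul_one]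
  · apply le_antisymm _ bot_le
    intro x hx
    apply mem_bot_of_forall_loc D K x
    intro N hN
    have hNbot : N ≠ ⊥ := Ring.ne_bot_of_isMaximal_of_not_isField hN hf
    have hT : TOf D K N ∈ stdDecomp D K := ⟨N, hN, rfl⟩
    have hxT : x ∈ TOf D K N := (Algebra.mem_sInf.mp hx) _ hT
    have hloc : locAt D K N hN.isPrime ∈
        {A | ∃ (N' : Ideal D) (hN' : N'.IsMaximal),
          Dependent D N N' ∧ A = locAt D K N' hN'.isPrime} :=
      ⟨N, hN, ⟨N, hN.isPrime, hNbot, le_rfl, le_rfl⟩, rfl⟩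
    exact (Algebra.mem_sInf.mp hxT) _ hloc

/-- For a semistar operation `⋆` on a semilocal Prüfer domain `D`
with standard decomposition `Θ`: `D^⋆ = D` if and only if `D ∈ supp(⋆)` and, for
every `T ∈ Θ`, `Γ_T(⋆)(D)` is a star operation on `T` (i.e. `D^⋆·T = T`). -/
theorem statement10
    (D : Type*) [CommRing D] [IsDomain D]
    (K : Type*) [Field K] [Algebra D K] [IsFractionRing D K]
    (hPruf : IsPrufer D K) (hsl : IsSemilocal D)
    (s : Semistar D K) :
    s.toFun 1 = 1 ↔
      ((⊥ : Subalgebra D K) ∈ supp D K s ∧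
        ∀ T ∈ stdDecomp D K,
          s.toFun 1 * Subalgebra.toSubmodule T = Subalgebra.toSubmodule T) := by
  constructor
  · intro h
    refine ⟨⟨⟨stdDecomp D K, subset_rfl, (sInf_stdDecomp_eq_bot D K).symm⟩, ?_⟩, ?_⟩
    · rw [Algebra.toSubmodule_bot, h]
      constructor
      · intro a ha y hy
        rw [Algebra.mem_bot] at ha
        obtain ⟨d, rfl⟩ := ha
        rw [Submodule.mem_one] at hy ⊢
        obtain ⟨e, rfl⟩ := hy
        exact ⟨d * e, by rw [map_mul]⟩
      · refine ⟨1, one_ne_zero, fun y hy => ?_⟩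
        rw [one_mul, Algebra.mem_bot]
        rw [Submodule.mem_one] at hy
        obtain ⟨e, rfl⟩ := hy
        exact ⟨e, rfl⟩
    · intro T hT
      rw [h, one_mul]
  · rintro ⟨-, hT⟩
    apply le_antisymm _ (s.le_star' 1)
    have hle : ∀ T ∈ stdDecomp D K, s.toFun 1 ≤ Subalgebra.toSubmodule T := by
      intro T hTmem
      have h1T : (1 : Submodule D K) ≤ Subalgebra.toSubmodule T :=
        Submodule.one_le.mpr T.one_mem
      calc s.toFun 1 = s.toFun 1 * 1 := (mul_one _).symm
        _ ≤ s.toFun 1 * Subalgebra.toSubmodule T := mul_le_mul_right h1T _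
        _ = Subalgebra.toSubmodule T := hT T hTmem
    intro y hy
    have : y ∈ sInf (stdDecomp D K) := by
      rw [Algebra.mem_sInf]
      intro T hTmem
      exact hle T hTmem hy
    rw [sInf_stdDecomp_eq_bot D K, Algebra.mem_bot] at this
    rw [Submodule.mem_one]
    obtain ⟨e, he⟩ := this
    exact ⟨e, he⟩

end Paper
end
end

section
/- Let 𝒫 and 𝒬 be finite partially ordered sets, and for each natural number n let n̲ denote the linearly ordered set {1, …, n}. Define H_{𝒫,𝒬}(n) := |hom(𝒫, 𝒬 ⊕ n̲)|. Then H_{𝒫,𝒬} is a polynomial function of n of degree |𝒫|. -/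
/- Common background: Prüfer domains, semistar and (fractional) star operations,
standard decomposition, skeleton, supports, `hiSpec`, the rings `Z(P)`,
and the invariants `ω` and `ε`, following Spirito,
"Semistar operations on semilocal Prüfer domains". -/

set_option linter.unusedSectionVars false
set_option maxHeartbeats 1000000

open Pointwise

noncomputable section

namespace Stmt16Aux
open Polynomial Finset

section Defs
variable {α β γ : Type*} [PartialOrder α] [PartialOrder β] [PartialOrder γ]
def sumLexCongrRight (g : β →o γ) : (α ⊕ₗ β) →o (α ⊕ₗ γ) where
  toFun x := toLex (Sum.map id g (ofLex x))
  monotone' := by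
    intro a b h
    cases h with
    | inl h => exact Sum.Lex.inl_le_inl_iff.2 h
    | inr h => exact Sum.Lex.inr_le_inr_iff.2 (g.monotone h)
    | sep => exact Sum.Lex.inl_le_inr _ _
end Defs

instance {α X : Type*} [Preorder α] [Preorder X] [Finite α] [Finite X] : Finite (α →o X) :=
  Finite.of_injective (fun f => (f : α → X)) DFunLike.coe_injective

variable (P Q : Type*) [PartialOrder P] [Fintype P] [PartialOrder Q] [Fintype Q]

def Full (k : ℕ) : Type _ :=
  {f : P →o Q ⊕ₗ Fin k // ∀ i : Fin k, ∃ x, f x = toLex (Sum.inr i)}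

instance (k : ℕ) : Finite (Full P Q k) := Subtype.finite

def c (k : ℕ) : ℕ := Nat.card (Full P Q k)

open Classical in
def imgs {n : ℕ} (F : P →o Q ⊕ₗ Fin n) : Finset (Fin n) :=
  Finset.univ.filter (fun i => ∃ x, F x = toLex (Sum.inr i))

theorem c_eq_zero {k : ℕ} (h : Fintype.card P < k) : c P Q k = 0 := by
  have : IsEmpty (Full P Q k) := by
    constructor
    rintro ⟨f, hf⟩
    choose g hg using hf
    have hinj : Function.Injective g := by
      intro i j hij
      exact Sum.inr_injective (toLex.injective ((hg i).symm.trans (hij ▸ hg j)))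
    have := Fintype.card_le_of_injective g hinj
    rw [Fintype.card_fin] at this; omega
  simp [c, Nat.card_of_isEmpty]

theorem c_pos : 0 < c P Q (Fintype.card P) := by
  have : Nonempty (Full P Q (Fintype.card P)) := by
    letI : Fintype (LinearExtension P) := ‹Fintype P›
    have hcard : Fintype.card (LinearExtension P) = Fintype.card P := rfl
    let e : LinearExtension P ≃o Fin (Fintype.card P) := (monoEquivOfFin _ hcard).symm
    refine ⟨⟨⟨fun x => toLex (Sum.inr (e (toLinearExtension x))), ?_⟩, ?_⟩⟩
    · intro a b hab
      exact Sum.Lex.inr_le_inr_iff.2 (e.monotone (toLinearExtension.monotone hab))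
    · intro i
      exact ⟨(e.symm i : LinearExtension P), congrArg (toLex ∘ Sum.inr) (e.apply_symm_apply i)⟩
  exact Nat.card_pos

theorem fiber_equiv {n : ℕ} (S : Finset (Fin n)) :
    Nonempty (Full P Q S.card ≃ {F : P →o Q ⊕ₗ Fin n // imgs P Q F = S}) := by
  classical
  set e := S.orderIsoOfFin rfl with he
  let emb : Fin S.card →o Fin n := ⟨fun j => (e j : Fin n), fun a b h => e.monotone h⟩
  let Φ : Full P Q S.card → {F : P →o Q ⊕ₗ Fin n // imgs P Q F = S} := fun f =>
    ⟨(sumLexCongrRight emb).comp f.1, by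
      ext i
      simp only [imgs, Finset.mem_filter, Finset.mem_univ, true_and]
      constructor
      · rintro ⟨x, hx⟩
        rcases hfx : ofLex (f.1 x) with q | j
        · exfalso
          have : ((sumLexCongrRight emb).comp f.1) x = toLex (Sum.inl q) := by
            show toLex (Sum.map id emb (ofLex (f.1 x))) = _
            rw [hfx]; rfl
          rw [this] at hx
          exact Sum.inl_ne_inr (toLex.injective hx)
        · have : ((sumLexCongrRight emb).comp f.1) x = toLex (Sum.inr (emb j)) := by
            show toLex (Sum.map id emb (ofLex (f.1 x))) = _
            rw [hfx]; rfl
          rw [this] at hx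
          have : emb j = i := Sum.inr_injective (toLex.injective hx)
          rw [← this]
          exact (e j).2
      · intro hi
        obtain ⟨x, hx⟩ := f.2 (e.symm ⟨i, hi⟩)
        refine ⟨x, ?_⟩
        show toLex (Sum.map id emb (ofLex (f.1 x))) = _
        rw [show ofLex (f.1 x) = Sum.inr (e.symm ⟨i, hi⟩) from congrArg ofLex hx]
        show toLex (Sum.inr ((e (e.symm ⟨i, hi⟩) : Fin n))) = _
        rw [e.apply_symm_apply]⟩
  have hinj : Function.Injective Φ := by
    intro f₁ f₂ h
    have h' : ∀ x, toLex (Sum.map id emb (ofLex (f₁.1 x))) =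
        toLex (Sum.map id emb (ofLex (f₂.1 x))) :=
      fun x => congrArg (fun F => (F : {F : P →o Q ⊕ₗ Fin n // imgs P Q F = S}).1 x) h
    apply Subtype.ext; apply OrderHom.ext; funext x
    have := toLex.injective (h' x)
    rcases h1 : ofLex (f₁.1 x) with q | j <;> rcases h2 : ofLex (f₂.1 x) with q' | j' <;>
      rw [h1, h2] at this
    · have : q = q' := Sum.inl_injective this
      calc f₁.1 x = toLex (ofLex (f₁.1 x)) := rfl
        _ = toLex (ofLex (f₂.1 x)) := by rw [h1, h2, this]
        _ = f₂.1 x := rfl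
    · exact absurd this (by simp [Sum.map])
    · exact absurd this (by simp [Sum.map])
    · have : emb j = emb j' := Sum.inr_injective this
      have hj : j = j' := e.injective (Subtype.ext this)
      calc f₁.1 x = toLex (ofLex (f₁.1 x)) := rfl
        _ = toLex (ofLex (f₂.1 x)) := by rw [h1, h2, hj]
        _ = f₂.1 x := rfl
  have hsurj : Function.Surjective Φ := by
    rintro ⟨F, hF⟩
    have hmem : ∀ {x : P} {i : Fin n}, ofLex (F x) = Sum.inr i → i ∈ S := by
      intro x i h
      rw [← hF]
      simp only [imgs, Finset.mem_filter, Finset.mem_univ, true_and]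
      exact ⟨x, by rw [← h]; rfl⟩
    let g : P → Q ⊕ₗ Fin S.card := fun x =>
      match h : ofLex (F x) with
      | Sum.inl q => toLex (Sum.inl q)
      | Sum.inr i => toLex (Sum.inr (e.symm ⟨i, hmem h⟩))
    have hg : ∀ x, toLex (Sum.map id emb (ofLex (g x))) = F x := by
      intro x
      show toLex (Sum.map id emb (ofLex (match h : ofLex (F x) with
        | Sum.inl q => toLex (Sum.inl q)
        | Sum.inr i => toLex (Sum.inr (e.symm ⟨i, hmem h⟩))))) = F x
      split
      next q heq =>
        show toLex (Sum.inl q) = F x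
        rw [← heq]; rfl
      next i heq =>
        show toLex (Sum.inr ((e (e.symm ⟨i, hmem heq⟩) : Fin n))) = F x
        rw [e.apply_symm_apply]
        show toLex (Sum.inr i) = F x
        rw [← heq]; rfl
    have hgmono : Monotone g := by
      intro a b hab
      have hFab := F.monotone hab
      show (match h : ofLex (F a) with
        | Sum.inl q => toLex (Sum.inl q)
        | Sum.inr i => toLex (Sum.inr (e.symm ⟨i, hmem h⟩))) ≤
        (match h : ofLex (F b) with
        | Sum.inl q => toLex (Sum.inl q)
        | Sum.inr i => toLex (Sum.inr (e.symm ⟨i, hmem h⟩)))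
      split <;> split
      next q heq1 q' heq2 =>
        have : (toLex (Sum.inl q) : Q ⊕ₗ Fin n) ≤ toLex (Sum.inl q') := by
          rw [← heq1, ← heq2]; exact hFab
        exact Sum.Lex.inl_le_inl_iff.2 (Sum.Lex.inl_le_inl_iff.1 this)
      next q heq1 i' heq2 => exact Sum.Lex.inl_le_inr _ _
      next i heq1 q' heq2 =>
        exfalso
        have : (toLex (Sum.inr i) : Q ⊕ₗ Fin n) ≤ toLex (Sum.inl q') := by
          rw [← heq1, ← heq2]; exact hFab
        exact Sum.Lex.not_inr_le_inl this
      next i heq1 i' heq2 =>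
        refine Sum.Lex.inr_le_inr_iff.2 ?_
        have hii : i ≤ i' := by
          have : (toLex (Sum.inr i) : Q ⊕ₗ Fin n) ≤ toLex (Sum.inr i') := by
            rw [← heq1, ← heq2]; exact hFab
          exact Sum.Lex.inr_le_inr_iff.1 this
        exact e.symm.monotone (Subtype.mk_le_mk.2 hii)
    have hfull : ∀ j : Fin S.card, ∃ x, g x = toLex (Sum.inr j) := by
      intro j
      have hjS : (e j : Fin n) ∈ S := (e j).2
      have : (e j : Fin n) ∈ imgs P Q F := hF ▸ hjS
      simp only [imgs, Finset.mem_filter, Finset.mem_univ, true_and] at this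
      obtain ⟨x, hx⟩ := this
      refine ⟨x, ?_⟩
      have hofl : ofLex (F x) = Sum.inr (e j : Fin n) := congrArg ofLex hx
      show (match h : ofLex (F x) with
        | Sum.inl q => toLex (Sum.inl q)
        | Sum.inr i => toLex (Sum.inr (e.symm ⟨i, hmem h⟩))) = toLex (Sum.inr j)
      split
      next q heq =>
        rw [heq] at hofl
        simp at hofl
      next i heq =>
        rw [heq] at hofl
        obtain rfl : i = (e j : Fin n) := Sum.inr_injective hofl
        simp only [Subtype.coe_eta, OrderIso.symm_apply_apply]
    refine ⟨⟨⟨g, hgmono⟩, hfull⟩, ?_⟩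
    apply Subtype.ext; apply OrderHom.ext; funext x
    exact hg x
  exact ⟨Equiv.ofBijective Φ ⟨hinj, hsurj⟩⟩

theorem key_count (n : ℕ) :
    Nat.card (P →o Q ⊕ₗ Fin n) =
      ∑ k ∈ range (Fintype.card P + 1), n.choose k * c P Q k := by
  classical
  have h1 : Nat.card (P →o Q ⊕ₗ Fin n) =
      ∑ S : Finset (Fin n), Nat.card {F : P →o Q ⊕ₗ Fin n // imgs P Q F = S} := by
    rw [← Nat.card_congr (Equiv.sigmaFiberEquiv (fun F : P →o Q ⊕ₗ Fin n => imgs P Q F))]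
    letI : Fintype (P →o Q ⊕ₗ Fin n) := Fintype.ofFinite _
    letI : ∀ S : Finset (Fin n), Fintype {F : P →o Q ⊕ₗ Fin n // imgs P Q F = S} :=
      fun S => Fintype.ofFinite _
    simp only [Nat.card_eq_fintype_card]
    rw [Fintype.card_sigma]
  rw [h1]
  have h2 : ∀ S : Finset (Fin n),
      Nat.card {F : P →o Q ⊕ₗ Fin n // imgs P Q F = S} = c P Q S.card :=
    fun S => (Nat.card_congr (fiber_equiv P Q S).some.symm)
  simp_rw [h2]
  rw [show (univ : Finset (Finset (Fin n))) = (univ : Finset (Fin n)).powerset from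
    Finset.powerset_univ.symm]
  rw [Finset.sum_powerset_apply_card (fun k => c P Q k)]
  simp only [Finset.card_univ, Fintype.card_fin, smul_eq_mul]
  set d := Fintype.card P with hd
  rw [Finset.sum_subset (Finset.range_subset_range.2 (le_max_left (n+1) (d+1)))
    (fun k _ hk => by
      rw [Finset.mem_range, not_lt] at hk
      rw [Nat.choose_eq_zero_of_lt (by omega), Nat.zero_mul]),
    ← Finset.sum_subset (Finset.range_subset_range.2 (le_max_right (n+1) (d+1)))
    (fun k _ hk => by
      rw [Finset.mem_range, not_lt] at hk
      rw [c_eq_zero P Q (k := k) (by omega), Nat.mul_zero])]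

theorem statement16aux :
    ∃ p : Polynomial ℚ, p.degree = (Fintype.card P : WithBot ℕ) ∧
      ∀ n : ℕ, (Nat.card (P →o (Q ⊕ₗ Fin n)) : ℚ) = p.eval (n : ℚ) := by
  classical
  set d := Fintype.card P with hd
  refine ⟨∑ k ∈ range (d + 1),
    C ((c P Q k : ℚ) / (k.factorial : ℚ)) * descPochhammer ℚ k, ?_, ?_⟩
  · rw [Finset.sum_range_succ]
    have hdesc : ∀ k : ℕ, (descPochhammer ℚ k).degree = (k : WithBot ℕ) := by
      intro k
      rw [degree_eq_natDegree (monic_descPochhammer ℚ k).ne_zero, descPochhammer_natDegree]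
    have hcd : ((c P Q d : ℚ) / (d.factorial : ℚ)) ≠ 0 := by
      apply div_ne_zero
      · exact_mod_cast Nat.pos_iff_ne_zero.1 (c_pos P Q)
      · exact_mod_cast d.factorial_ne_zero
    have hlast : (C ((c P Q d : ℚ) / (d.factorial : ℚ)) * descPochhammer ℚ d).degree
        = (d : WithBot ℕ) := by
      rw [degree_mul, degree_C hcd, hdesc, zero_add]
    rw [degree_add_eq_right_of_degree_lt, hlast]
    rw [hlast]
    refine lt_of_le_of_lt (degree_sum_le _ _) ?_
    rw [Finset.sup_lt_iff (by exact_mod_cast WithBot.bot_lt_coe d)]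
    intro k hk
    rw [Finset.mem_range] at hk
    refine lt_of_le_of_lt (degree_mul_le _ _) ?_
    refine lt_of_le_of_lt (add_le_add degree_C_le (le_of_eq (hdesc k))) ?_
    rw [zero_add]
    exact_mod_cast WithBot.coe_lt_coe.2 hk
  · intro n
    rw [key_count P Q n]
    push_cast
    rw [eval_finset_sum]
    refine Finset.sum_congr rfl fun k _ => ?_
    rw [eval_mul, eval_C, descPochhammer_eval_eq_descFactorial ℚ n k,
      Nat.descFactorial_eq_factorial_mul_choose]
    have hk0 : (k.factorial : ℚ) ≠ 0 := by exact_mod_cast k.factorial_ne_zero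
    push_cast
    field_simp

end Stmt16Aux

namespace Paper

/-- For finite posets `𝒫, 𝒬`, the function
`n ↦ |hom(𝒫, 𝒬 ⊕ n̲)|` is a polynomial function of degree `|𝒫|`. -/
theorem statement16
    (P : Type*) [PartialOrder P] [Fintype P]
    (Q : Type*) [PartialOrder Q] [Fintype Q] :
    ∃ p : Polynomial ℚ, p.degree = (Fintype.card P : WithBot ℕ) ∧
      ∀ n : ℕ, (Nat.card (P →o (Q ⊕ₗ Fin n)) : ℚ) = p.eval (n : ℚ) := by
  exact Stmt16Aux.statement16aux P Q

end Paper
end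
end
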